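/- Quantum Pinsker inequality (Frobenius-norm form): for any density matrices ρ and σ on ℂ^d with σ positive definite, the quantum relative entropy satisfies S(ρ‖σ) ≥ (1/(2 ln 2))·‖ρ − σ‖₂². -/

import Mathlib

open scoped ComplexOrder

noncomputable section

/-- The Frobenius (Hilbert–Schmidt) norm of a complex matrix. -/
def frob {m n : Type*} [Fintype m] [Fintype n] (A : Matrix m n ℂ) : ℝ :=
  Real.sqrt (∑ i, ∑ j, ‖A i j‖ ^ 2)

/-- The matrix logarithm base 2, defined by functional calculus (applying `Real.logb 2`
to the eigenvalues in a spectral decomposition). Junk value `0` on non-Hermitian input. -/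
def matLog2 {n : Type*} [Fintype n] [DecidableEq n] (σ : Matrix n n ℂ) : Matrix n n ℂ :=
  if h : σ.IsHermitian then
    (h.eigenvectorUnitary : Matrix n n ℂ) *
      Matrix.diagonal (fun i => (Real.logb 2 (h.eigenvalues i) : ℂ)) *
      (star h.eigenvectorUnitary : Matrix n n ℂ)
  else 0

/-- The quantum relative entropy in bits, S(ρ‖σ) = Tr[ρ log₂ ρ] − Tr[ρ log₂ σ], where
Tr[ρ log₂ ρ] = ∑ᵢ λᵢ log₂ λᵢ over the eigenvalues of ρ (with 0·log₂ 0 = 0) and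
log₂ σ is given by functional calculus. -/
def relEntropy {n : Type*} [Fintype n] [DecidableEq n] (ρ σ : Matrix n n ℂ) : ℝ :=
  (if h : ρ.IsHermitian then ∑ i, h.eigenvalues i * Real.logb 2 (h.eigenvalues i) else 0) -
    (ρ * matLog2 σ).trace.re

open scoped Matrix


lemma hd1 (x : ℝ) (hx0 : x ≠ 0) : HasDerivAt (fun x : ℝ => (x - 1/x)/2 - Real.log x)
    ((1 - (-1/x^2))/2 - 1/x) x := by
  have h := (((hasDerivAt_id x).sub ((hasDerivAt_const x (1:ℝ)).div (hasDerivAt_id x) hx0)).div_const 2).sub (Real.hasDerivAt_log hx0)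
  refine h.congr_deriv ?_
  simp only [id]
  ring

lemma hd2 (t : ℝ) (ht0 : t ≠ 0) (ht1 : t + 1 ≠ 0) :
    HasDerivAt (fun t : ℝ => Real.log t - 2*(t-1)/(t+1))
      (1/t - (2*(t+1) - 2*(t-1)*1)/(t+1)^2) t := by
  have ha : HasDerivAt (fun t : ℝ => 2*(t-1)) 2 t := by
    simpa using ((hasDerivAt_id t).sub_const 1).const_mul 2
  have hb : HasDerivAt (fun t : ℝ => t+1) 1 t := (hasDerivAt_id t).add_const 1
  have h := (Real.hasDerivAt_log ht0).sub (ha.div hb ht1)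
  refine h.congr_deriv ?_
  ring

-- log y ≤ (y - 1/y)/2 for y ≥ 1
lemma log_le_half (y : ℝ) (hy : 1 ≤ y) : Real.log y ≤ (y - 1/y)/2 := by
  have key : MonotoneOn (fun x : ℝ => (x - 1/x)/2 - Real.log x) (Set.Ici 1) := by
    apply monotoneOn_of_deriv_nonneg (convex_Ici 1)
    · apply ContinuousOn.sub
      · exact ((continuousOn_id.sub (continuousOn_const.div continuousOn_id
          (fun x hx => by simp at hx; positivity))).div_const 2)
      · exact Real.continuousOn_log.mono (fun x hx => by simp at hx ⊢; positivity)
    · intro x hx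
      rw [interior_Ici] at hx
      simp only [Set.mem_Ioi] at hx
      exact ((hd1 x (by positivity)).differentiableAt).differentiableWithinAt
    · intro x hx
      rw [interior_Ici] at hx
      simp only [Set.mem_Ioi] at hx
      have hx0 : x ≠ 0 := by positivity
      rw [(hd1 x hx0).deriv]
      have : (1 - (-1/x^2))/2 - 1/x = (x-1)^2/(2*x^2) := by field_simp; ring
      rw [this]
      positivity
  have h := key (Set.mem_Ici.mpr le_rfl) (Set.mem_Ici.mpr hy) hy
  norm_num at h
  rw [one_div]
  linarith

-- log x ≥ 2(x-1)/(x+1) for x ≥ 1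
lemma log_ge_frac (x : ℝ) (hx : 1 ≤ x) : 2*(x-1)/(x+1) ≤ Real.log x := by
  have key : MonotoneOn (fun t : ℝ => Real.log t - 2*(t-1)/(t+1)) (Set.Ici 1) := by
    apply monotoneOn_of_deriv_nonneg (convex_Ici 1)
    · apply ContinuousOn.sub
      · exact Real.continuousOn_log.mono (fun t ht => by simp at ht ⊢; positivity)
      · exact ContinuousOn.div (by fun_prop) (by fun_prop)
          (fun t ht => by simp at ht; positivity)
    · intro t ht
      rw [interior_Ici] at ht
      simp only [Set.mem_Ioi] at ht
      exact ((hd2 t (by positivity) (by positivity)).differentiableAt).differentiableWithinAt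
    · intro t ht
      rw [interior_Ici] at ht
      simp only [Set.mem_Ioi] at ht
      have ht0 : t ≠ 0 := by positivity
      have ht1 : t + 1 ≠ 0 := by positivity
      rw [(hd2 t ht0 ht1).deriv]
      have : 1/t - (2*(t+1) - 2*(t-1)*1)/(t+1)^2 = (t-1)^2/(t*(t+1)^2) := by
        field_simp; ring
      rw [this]
      positivity
  have h := key (Set.mem_Ici.mpr le_rfl) (Set.mem_Ici.mpr hx) hx
  norm_num at h
  linarith

lemma scalar_key (a b : ℝ) (ha0 : 0 ≤ a) (ha1 : a ≤ 1) (hb0 : 0 < b) (hb1 : b ≤ 1) :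
    (a - b) + (a - b)^2/2 ≤ a * Real.log a - a * Real.log b := by
  rcases eq_or_lt_of_le ha0 with h0 | ha0'
  · simp only [← h0]
    simp [Real.log_zero]
    nlinarith
  · rcases le_or_gt a b with hab | hab
    · have h := log_le_half (b/a) (by rw [le_div_iff₀ ha0']; linarith)
      have hlog : Real.log b - Real.log a ≤ (b/a - a/b)/2 := by
        rw [← Real.log_div (by positivity) (by positivity)]
        calc Real.log (b/a) ≤ (b/a - 1/(b/a))/2 := h
          _ = (b/a - a/b)/2 := by rw [one_div_div]
      have ha' : a ≠ 0 := ne_of_gt ha0'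
      have hb' : b ≠ 0 := ne_of_gt hb0
      have h2 : a * Real.log b - a * Real.log a ≤ a * ((b/a - a/b)/2) := by
        have := mul_le_mul_of_nonneg_left hlog ha0
        rw [mul_sub] at this; exact this
      have h3 : a * ((b/a - a/b)/2) = (b^2 - a^2)/(2*b) := by field_simp
      have h4 : (a - b) + (a-b)^2/2 ≤ (a^2 - b^2)/(2*b) := by
        rw [le_div_iff₀ (by positivity : (0:ℝ) < 2*b)]
        nlinarith [mul_nonneg (sub_nonneg.2 hb1) (sq_nonneg (a-b))]
      have h5 : (b^2 - a^2)/(2*b) = -((a^2-b^2)/(2*b)) := by ring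
      linarith
    · have h := log_ge_frac (a/b) (by rw [le_div_iff₀ hb0]; linarith)
      have hlog : 2*(a-b)/(a+b) ≤ Real.log a - Real.log b := by
        rw [← Real.log_div (by positivity) (by positivity)]
        calc 2*(a-b)/(a+b) = 2*(a/b-1)/(a/b+1) := by
              rw [div_eq_div_iff (by positivity) (by positivity)]; field_simp <;> ring
          _ ≤ Real.log (a/b) := h
      have key : a * (2*(a-b)/(a+b)) ≤ a * Real.log a - a * Real.log b := by
        have := mul_le_mul_of_nonneg_left hlog ha0
        rw [mul_sub] at this
        have h6 : a*((2*a-2*b)/(a+b)) = a*(2*(a-b)/(a+b)) := by ring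
        linarith
      have h4 : (a - b) + (a-b)^2/2 ≤ a * (2*(a-b)/(a+b)) := by
        have hab2 : (0:ℝ) < a + b := by linarith
        rw [mul_div_assoc', le_div_iff₀ hab2]
        nlinarith [mul_nonneg (by linarith : (0:ℝ) ≤ 2-a-b) (sq_nonneg (a-b))]
      linarith


lemma trace_diag_conj {n : Type*} [Fintype n] [DecidableEq n] (a b : n → ℝ) (W : Matrix n n ℂ) :
    (Matrix.diagonal (fun i => (a i : ℂ)) * W * Matrix.diagonal (fun j => (b j : ℂ)) * Wᴴ).trace
      = ((∑ i, ∑ j, a i * b j * Complex.normSq (W i j) : ℝ) : ℂ) := by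
  have hdiag : ∀ i, (Matrix.diagonal (fun i => (a i : ℂ)) * W * Matrix.diagonal (fun j => (b j : ℂ)) * Wᴴ) i i
      = ∑ j, ((a i : ℂ) * (b j : ℂ) * Complex.normSq (W i j)) := by
    intro i
    rw [Matrix.mul_apply]
    refine Finset.sum_congr rfl (fun j _ => ?_)
    rw [Matrix.mul_diagonal, Matrix.diagonal_mul, Matrix.conjTranspose_apply,
      Complex.star_def]
    rw [show (a i : ℂ) * W i j * (b j : ℂ) * (starRingEnd ℂ) (W i j)
        = (a i : ℂ) * (b j : ℂ) * (W i j * (starRingEnd ℂ) (W i j)) from by ring,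
      Complex.mul_conj]
  rw [Matrix.trace]
  push_cast
  exact Finset.sum_congr rfl (fun i _ => hdiag i)

lemma trace_spec_pair {n : Type*} [Fintype n] [DecidableEq n]
    (u v : Matrix n n ℂ) (a b : n → ℝ) :
    ((u * Matrix.diagonal (fun i => (a i : ℂ)) * star u) *
     (v * Matrix.diagonal (fun j => (b j : ℂ)) * star v)).trace
      = ((∑ i, ∑ j, a i * b j * Complex.normSq ((star u * v) i j) : ℝ) : ℂ) := by
  have h1 : (u * Matrix.diagonal (fun i => (a i : ℂ)) * star u) *
     (v * Matrix.diagonal (fun j => (b j : ℂ)) * star v)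
     = u * (Matrix.diagonal (fun i => (a i : ℂ)) * star u * v * Matrix.diagonal (fun j => (b j : ℂ)) * star v) := by
    simp only [Matrix.mul_assoc]
  rw [h1, Matrix.trace_mul_comm, ← trace_diag_conj a b (star u * v)]
  have hW : (star u * v)ᴴ = star v * u := by
    simp [Matrix.star_eq_conjTranspose, Matrix.conjTranspose_mul]
  rw [hW]
  simp only [Matrix.mul_assoc]

theorem quantum_pinsker {d : ℕ} (ρ σ : Matrix (Fin d) (Fin d) ℂ)
    (hρ : ρ.PosSemidef) (hρt : ρ.trace = 1)
    (hσ : σ.PosDef) (hσt : σ.trace = 1) :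
    relEntropy ρ σ ≥ (1 / (2 * Real.log 2)) * frob (ρ - σ) ^ 2 := by
  have hρh : ρ.IsHermitian := hρ.1
  have hσh : σ.IsHermitian := hσ.1
  set u : Matrix (Fin d) (Fin d) ℂ := (hρh.eigenvectorUnitary : Matrix (Fin d) (Fin d) ℂ) with hu_def
  set v : Matrix (Fin d) (Fin d) ℂ := (hσh.eigenvectorUnitary : Matrix (Fin d) (Fin d) ℂ) with hv_def
  set lam : Fin d → ℝ := hρh.eigenvalues with hlam_def
  set mu : Fin d → ℝ := hσh.eigenvalues with hmu_def
  set W : Matrix (Fin d) (Fin d) ℂ := star u * v with hW_def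
  set P : Fin d → Fin d → ℝ := fun i j => Complex.normSq (W i j) with hP_def
  -- spectral decompositions
  have hρspec : ρ = u * Matrix.diagonal (fun i => (lam i : ℂ)) * star u := hρh.spectral_theorem
  have hσspec : σ = v * Matrix.diagonal (fun j => (mu j : ℂ)) * star v := hσh.spectral_theorem
  -- unitarity
  have huu : u * star u = 1 := Matrix.mem_unitaryGroup_iff.mp hρh.eigenvectorUnitary.2
  have huu' : star u * u = 1 := Matrix.mem_unitaryGroup_iff'.mp hρh.eigenvectorUnitary.2
  have hvv : v * star v = 1 := Matrix.mem_unitaryGroup_iff.mp hσh.eigenvectorUnitary.2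
  have hvv' : star v * v = 1 := Matrix.mem_unitaryGroup_iff'.mp hσh.eigenvectorUnitary.2
  -- W is unitary
  have hWW : W * star W = 1 := by
    rw [hW_def, star_mul, star_star]
    calc star u * v * (star v * u) = star u * (v * star v) * u := by
          simp only [Matrix.mul_assoc]
      _ = 1 := by rw [hvv, Matrix.mul_one, huu']
  have hWW' : star W * W = 1 := by
    rw [hW_def, star_mul, star_star]
    calc star v * u * (star u * v) = star v * (u * star u) * v := by
          simp only [Matrix.mul_assoc]
      _ = 1 := by rw [huu, Matrix.mul_one, hvv']
  -- row and column sums of P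
  have hProw : ∀ i, ∑ j, P i j = 1 := by
    intro i
    have h1 : (W * star W) i i = 1 := by rw [hWW]; simp [Matrix.one_apply]
    rw [Matrix.mul_apply] at h1
    have h2 : ∀ j, W i j * (star W) j i = ((P i j : ℝ) : ℂ) := by
      intro j
      rw [Matrix.star_apply, Complex.star_def, Complex.mul_conj]
    rw [Finset.sum_congr rfl (fun j _ => h2 j)] at h1
    push_cast at h1
    exact_mod_cast h1
  have hPcol : ∀ j, ∑ i, P i j = 1 := by
    intro j
    have h1 : (star W * W) j j = 1 := by rw [hWW']; simp [Matrix.one_apply]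
    rw [Matrix.mul_apply] at h1
    have h2 : ∀ i, (star W) j i * W i j = ((P i j : ℝ) : ℂ) := by
      intro i
      rw [Matrix.star_apply, Complex.star_def, mul_comm, Complex.mul_conj]
    rw [Finset.sum_congr rfl (fun i _ => h2 i)] at h1
    push_cast at h1
    exact_mod_cast h1
  have hPnn : ∀ i j, 0 ≤ P i j := fun i j => Complex.normSq_nonneg _
  -- eigenvalue sums
  have hlamsum : ∑ i, lam i = 1 := by
    have h1 : ρ.trace = ((∑ i, lam i : ℝ) : ℂ) := by
      rw [hρspec, Matrix.trace_mul_comm, ← Matrix.mul_assoc, huu', Matrix.one_mul,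
        Matrix.trace_diagonal]
      push_cast; rfl
    rw [hρt] at h1
    exact_mod_cast h1.symm
  have hmusum : ∑ j, mu j = 1 := by
    have h1 : σ.trace = ((∑ j, mu j : ℝ) : ℂ) := by
      rw [hσspec, Matrix.trace_mul_comm, ← Matrix.mul_assoc, hvv', Matrix.one_mul,
        Matrix.trace_diagonal]
      push_cast; rfl
    rw [hσt] at h1
    exact_mod_cast h1.symm
  -- eigenvalue bounds
  have hlam0 : ∀ i, 0 ≤ lam i := fun i => hρ.eigenvalues_nonneg i
  have hmu0 : ∀ j, 0 < mu j := fun j => hσ.eigenvalues_pos j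
  have hlam1 : ∀ i, lam i ≤ 1 := by
    intro i
    rw [← hlamsum]
    exact Finset.single_le_sum (fun k _ => hlam0 k) (Finset.mem_univ i)
  have hmu1 : ∀ j, mu j ≤ 1 := by
    intro j
    rw [← hmusum]
    exact Finset.single_le_sum (fun k _ => le_of_lt (hmu0 k)) (Finset.mem_univ j)
  -- traces of products
  have T1 : (ρ * σ).trace = ((∑ i, ∑ j, lam i * mu j * P i j : ℝ) : ℂ) := by
    rw [hρspec, hσspec, trace_spec_pair]
  have T2 : (ρ * ρ).trace = ((∑ i, lam i ^ 2 : ℝ) : ℂ) := by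
    rw [hρspec, trace_spec_pair]
    norm_cast
    rw [huu']
    refine Finset.sum_congr rfl (fun i _ => ?_)
    rw [Finset.sum_eq_single i]
    · simp [Matrix.one_apply_eq, Complex.normSq_one]; ring
    · intro j _ hj
      simp [Matrix.one_apply_ne (Ne.symm hj)]
    · intro h; exact absurd (Finset.mem_univ i) h
  have T3 : (σ * σ).trace = ((∑ j, mu j ^ 2 : ℝ) : ℂ) := by
    rw [hσspec, trace_spec_pair]
    norm_cast
    rw [hvv']
    refine Finset.sum_congr rfl (fun i _ => ?_)
    rw [Finset.sum_eq_single i]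
    · simp [Matrix.one_apply_eq, Complex.normSq_one]; ring
    · intro j _ hj
      simp [Matrix.one_apply_ne (Ne.symm hj)]
    · intro h; exact absurd (Finset.mem_univ i) h
  have T4 : (ρ * matLog2 σ).trace
      = ((∑ i, ∑ j, lam i * Real.logb 2 (mu j) * P i j : ℝ) : ℂ) := by
    rw [matLog2, dif_pos hσh, hρspec]
    exact trace_spec_pair u v lam (fun j => Real.logb 2 (mu j))
  -- frobenius norm squared
  have hfrob : frob (ρ - σ) ^ 2
      = ∑ i, lam i ^ 2 + ∑ j, mu j ^ 2 - 2 * ∑ i, ∑ j, lam i * mu j * P i j := by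
    have hAH : (ρ - σ)ᴴ = ρ - σ := (hρh.sub hσh)
    have h1 : frob (ρ - σ) ^ 2 = ∑ i, ∑ j, Complex.normSq ((ρ - σ) i j) := by
      rw [frob, Real.sq_sqrt (by positivity)]
      refine Finset.sum_congr rfl (fun i _ => Finset.sum_congr rfl (fun j _ => ?_))
      rw [Complex.sq_norm]
    have h2 : ((ρ - σ) * (ρ - σ)).trace = ((∑ i, ∑ j, Complex.normSq ((ρ - σ) i j) : ℝ) : ℂ) := by
      rw [Matrix.trace]
      push_cast
      refine Finset.sum_congr rfl (fun i _ => ?_)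
      rw [Matrix.diag_apply, Matrix.mul_apply]
      refine Finset.sum_congr rfl (fun j _ => ?_)
      have : (ρ - σ) j i = star ((ρ - σ) i j) := by
        conv_lhs => rw [← hAH]
        rw [Matrix.conjTranspose_apply]
      rw [this, Complex.star_def, Complex.mul_conj]
    have h3 : ((ρ - σ) * (ρ - σ)).trace
        = (ρ*ρ).trace - (ρ*σ).trace - (σ*ρ).trace + (σ*σ).trace := by
      rw [Matrix.sub_mul, Matrix.mul_sub, Matrix.mul_sub, Matrix.trace_sub, Matrix.trace_sub,
        Matrix.trace_sub]
      ring
    have h4 : (σ*ρ).trace = (ρ*σ).trace := Matrix.trace_mul_comm σ ρ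
    rw [h4, T1, T2, T3] at h3
    rw [h1]
    have := h3.symm.trans h2
    push_cast at this
    have := Complex.ofReal_injective (by exact_mod_cast this : ((∑ i, lam i ^ 2 - _ - _ + _ : ℝ) : ℂ) = _)
    linarith [this]
  -- relEntropy as a double sum
  have hlog2 : (0:ℝ) < Real.log 2 := Real.log_pos (by norm_num)
  have hRE : relEntropy ρ σ
      = (∑ i, ∑ j, P i j * (lam i * Real.log (lam i) - lam i * Real.log (mu j))) / Real.log 2 := by
    rw [relEntropy, dif_pos hρh]
    have hT4re : (ρ * matLog2 σ).trace.re
        = ∑ i, ∑ j, lam i * Real.logb 2 (mu j) * P i j := by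
      rw [T4, Complex.ofReal_re]
    rw [hT4re]
    have hfirst : ∑ i, hρh.eigenvalues i * Real.logb 2 (hρh.eigenvalues i)
        = ∑ i, ∑ j, P i j * (lam i * Real.logb 2 (lam i)) := by
      refine Finset.sum_congr rfl (fun i _ => ?_)
      rw [← Finset.sum_mul, hProw i, one_mul]
    rw [hfirst, ← Finset.sum_sub_distrib]
    rw [Finset.sum_div]
    refine Finset.sum_congr rfl (fun i _ => ?_)
    rw [← Finset.sum_sub_distrib, Finset.sum_div]
    refine Finset.sum_congr rfl (fun j _ => ?_)
    rw [Real.logb, Real.logb]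
    field_simp
  -- aggregated sum identities
  have eA : ∑ i, ∑ j, P i j * lam i = 1 := by
    rw [Finset.sum_congr rfl (fun i (_ : i ∈ Finset.univ) => by
      rw [← Finset.sum_mul, hProw i, one_mul] : ∀ i ∈ Finset.univ, ∑ j, P i j * lam i = lam i)]
    exact hlamsum
  have eB : ∑ i, ∑ j, P i j * mu j = 1 := by
    rw [Finset.sum_comm]
    rw [Finset.sum_congr rfl (fun j (_ : j ∈ Finset.univ) => by
      rw [← Finset.sum_mul, hPcol j, one_mul] : ∀ j ∈ Finset.univ, ∑ i, P i j * mu j = mu j)]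
    exact hmusum
  have eC : ∑ i, ∑ j, P i j * lam i ^ 2 = ∑ i, lam i ^ 2 := by
    refine Finset.sum_congr rfl (fun i _ => ?_)
    rw [← Finset.sum_mul, hProw i, one_mul]
  have eD : ∑ i, ∑ j, P i j * mu j ^ 2 = ∑ j, mu j ^ 2 := by
    rw [Finset.sum_comm]
    refine Finset.sum_congr rfl (fun j _ => ?_)
    rw [← Finset.sum_mul, hPcol j, one_mul]
  -- the key inequality on the double sum
  have hS : frob (ρ - σ) ^ 2 / 2
      ≤ ∑ i, ∑ j, P i j * (lam i * Real.log (lam i) - lam i * Real.log (mu j)) := by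
    have step : ∑ i, ∑ j, P i j * ((lam i - mu j) + (lam i - mu j)^2/2)
        ≤ ∑ i, ∑ j, P i j * (lam i * Real.log (lam i) - lam i * Real.log (mu j)) :=
      Finset.sum_le_sum (fun i _ => Finset.sum_le_sum (fun j _ =>
        mul_le_mul_of_nonneg_left
          (scalar_key (lam i) (mu j) (hlam0 i) (hlam1 i) (hmu0 j) (hmu1 j)) (hPnn i j)))
    have expand : ∑ i, ∑ j, P i j * ((lam i - mu j) + (lam i - mu j)^2/2)
        = (∑ i, ∑ j, P i j * lam i) - (∑ i, ∑ j, P i j * mu j)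
          + ((∑ i, ∑ j, P i j * lam i ^ 2) - 2 * (∑ i, ∑ j, lam i * mu j * P i j)
             + (∑ i, ∑ j, P i j * mu j ^ 2)) / 2 := by
      have hterm : ∀ i j, P i j * ((lam i - mu j) + (lam i - mu j)^2/2)
          = P i j * lam i - P i j * mu j
            + (P i j * lam i ^ 2 - 2 * (lam i * mu j * P i j) + P i j * mu j ^ 2)/2 := by
        intro i j; ring
      simp only [hterm, Finset.sum_add_distrib, Finset.sum_sub_distrib, ← Finset.sum_div,
        ← Finset.mul_sum]
    rw [expand, eA, eB, eC, eD] at step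
    linarith [step, hfrob]
  -- conclude
  rw [ge_iff_le, hRE, le_div_iff₀ hlog2]
  have : 1 / (2 * Real.log 2) * frob (ρ - σ) ^ 2 * Real.log 2 = frob (ρ - σ) ^ 2 / 2 := by
    field_simp
  rw [this]
  exact hS
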